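/- Let R be a finite commutative local ring of odd characteristic in which -1 is not a square of a unit, and let z be a unit of R that is not a square of a unit. Then the 2×2 identity matrix I₂ is cogredient to the diagonal matrix diag(1, -z) over R. -/

import Mathlib

/-- Two square matrices are cogredient if `P * S1 * P.transpose = S2` for some invertible `P`. -/
def Cogredient {R : Type*} [CommRing R] {n : Type*} [Fintype n] [DecidableEq n]
    (S1 S2 : Matrix n n R) : Prop :=
  ∃ P : Matrix n n R, IsUnit P.det ∧ P * S1 * P.transpose = S2

/-- Block diagonal sum `A ⊕ B` of square matrices. -/
def matOplus {R : Type*} [CommRing R] {a b : ℕ}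
    (A : Matrix (Fin a) (Fin a) R) (B : Matrix (Fin b) (Fin b) R) :
    Matrix (Fin (a + b)) (Fin (a + b)) R :=
  (Matrix.reindex finSumFinEquiv finSumFinEquiv) (Matrix.fromBlocks A 0 0 B)

/-- The hyperbolic matrix `H_{2ν} = [[0, I_ν], [I_ν, 0]]`. -/
def hypMat (R : Type*) [CommRing R] (ν : ℕ) : Matrix (Fin (ν + ν)) (Fin (ν + ν)) R :=
  (Matrix.reindex finSumFinEquiv finSumFinEquiv)
    (Matrix.fromBlocks (0 : Matrix (Fin ν) (Fin ν) R) 1 1 0)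

/-- In a finite ring of odd characteristic, `2` is a unit. -/
lemma aux_two_unit {R : Type*} [CommRing R] [Fintype R] (hchar : Odd (ringChar R)) :
    IsUnit (2 : R) := by
  obtain ⟨k, hk⟩ := hchar
  refine IsUnit.of_mul_eq_one (a := (2 : R)) ((k : R) + 1) ?_
  have h0 : ((ringChar R : ℕ) : R) = 0 := CharP.cast_eq_zero R (ringChar R)
  rw [hk] at h0
  push_cast at h0
  linear_combination h0

/-- In a local ring where `2` is a unit, the only square roots of `1` are `±1`. -/
lemma aux_sq_one {R : Type*} [CommRing R] [IsLocalRing R] (h2 : IsUnit (2 : R))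
    (x : Rˣ) (hx : x ^ 2 = 1) : x = 1 ∨ x = -1 := by
  have hxR : (x : R) ^ 2 = 1 := by
    have := congrArg (Units.val) hx; push_cast at this; simpa using this
  have hadd : IsUnit (((x : R) + 1) + (1 - (x : R))) := by
    have he : ((x : R) + 1) + (1 - (x : R)) = 2 := by ring
    rw [he]; exact h2
  rcases IsLocalRing.isUnit_or_isUnit_of_isUnit_add hadd with h | h
  · left
    have h1 : ((x : R) - 1) * ((x : R) + 1) = 0 * ((x : R) + 1) := by
      ring_nf; linear_combination hxR
    have := h.mul_right_cancel h1
    ext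
    push_cast
    linear_combination this
  · right
    have h1 : (1 - (x : R)) * ((x : R) + 1) = (1 - (x : R)) * 0 := by
      ring_nf; linear_combination -hxR
    have := h.mul_left_cancel h1
    ext
    push_cast
    linear_combination this

/-- If `-1` and `z` are non-square units and the square roots of `1` are exactly `±1`,
then `-z` is a square (by an index-2 counting argument on the subgroup of squares). -/
lemma aux_key {R : Type*} [CommRing R] [Fintype R]
    (hne : (-1 : Rˣ) ≠ 1)
    (hsq : ∀ x : Rˣ, x ^ 2 = 1 → x = 1 ∨ x = -1)
    (hm1 : ∀ a : Rˣ, (-1 : Rˣ) ≠ a ^ 2) (z : Rˣ) (hz : ∀ a : Rˣ, z ≠ a ^ 2) :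
    ∃ a : Rˣ, -z = a ^ 2 := by
  classical
  set f : Rˣ →* Rˣ := powMonoidHom 2 with hf
  have hker : (f.ker : Set Rˣ) = {1, -1} := by
    ext x
    simp only [SetLike.mem_coe, MonoidHom.mem_ker, hf, powMonoidHom_apply,
      Set.mem_insert_iff, Set.mem_singleton_iff]
    constructor
    · exact hsq x
    · rintro (rfl | rfl) <;> simp
  have hkcard : Nat.card f.ker = 2 := by
    rw [← SetLike.coe_sort_coe, Nat.card_coe_set_eq, hker,
      Set.ncard_pair (Ne.symm hne)]
  have hlag : Nat.card Rˣ = Nat.card (Rˣ ⧸ f.ker) * 2 := by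
    rw [← hkcard]; exact Subgroup.card_eq_card_quotient_mul_card_subgroup f.ker
  have hrange : Nat.card f.range = Nat.card (Rˣ ⧸ f.ker) :=
    (Nat.card_congr (QuotientGroup.quotientKerEquivRange f).toEquiv).symm
  have hlag2 : Nat.card Rˣ = Nat.card (Rˣ ⧸ f.range) * Nat.card f.range :=
    Subgroup.card_eq_card_quotient_mul_card_subgroup f.range
  have hpos : 0 < Nat.card f.range := Nat.card_pos
  have hQ : Nat.card (Rˣ ⧸ f.range) = 2 := by
    have h3 : Nat.card (Rˣ ⧸ f.range) * Nat.card f.range = 2 * Nat.card f.range := by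
      rw [← hlag2, hlag, hrange]; ring
    exact Nat.eq_of_mul_eq_mul_right hpos h3
  haveI : Fintype (Rˣ ⧸ f.range) := Fintype.ofFinite _
  have hQf : Fintype.card (Rˣ ⧸ f.range) = 2 := by
    rw [← Nat.card_eq_fintype_card]; exact hQ
  have hq1 : ((-1 : Rˣ) : Rˣ ⧸ f.range) ≠ 1 := by
    rw [Ne, QuotientGroup.eq_one_iff]
    rintro ⟨a, ha⟩
    exact hm1 a (by rw [← ha]; simp [hf, powMonoidHom_apply])
  have hqz : ((z : Rˣ) : Rˣ ⧸ f.range) ≠ 1 := by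
    rw [Ne, QuotientGroup.eq_one_iff]
    rintro ⟨a, ha⟩
    exact hz a (by rw [← ha]; simp [hf, powMonoidHom_apply])
  have heq : ((-1 : Rˣ) : Rˣ ⧸ f.range) = ((z : Rˣ) : Rˣ ⧸ f.range) := by
    by_contra h
    have h3 : 2 < Fintype.card (Rˣ ⧸ f.range) :=
      Fintype.two_lt_card_iff.mpr ⟨1, _, _, Ne.symm hq1, Ne.symm hqz, h⟩
    omega
  have hz2 : ((z : Rˣ) : Rˣ ⧸ f.range) ^ 2 = 1 := by
    have := pow_card_eq_one' (x := ((z : Rˣ) : Rˣ ⧸ f.range))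
    rwa [hQ] at this
  have hmem : -z ∈ f.range := by
    rw [← QuotientGroup.eq_one_iff]
    have hmz : (-z : Rˣ) = (-1) * z := by simp
    rw [hmz, QuotientGroup.mk_mul, heq, ← sq, hz2]
  obtain ⟨a, ha⟩ := hmem
  exact ⟨a, by rw [← ha]; simp [hf, powMonoidHom_apply]⟩

/-- if -1 is not a square of a unit and z is a non-square unit, then `I₂`
is cogredient to `diag(1, -z)`. -/
theorem stmt_14 (R : Type*) [CommRing R] [IsLocalRing R] [Fintype R]
    (hchar : Odd (ringChar R)) (hm1 : ∀ a : Rˣ, (-1 : R) ≠ (a : R) ^ 2)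
    (z : Rˣ) (hz : ∀ a : Rˣ, z ≠ a ^ 2) :
    Cogredient (1 : Matrix (Fin 2) (Fin 2) R)
      (Matrix.diagonal ![(1 : R), -(z : R)]) := by
  have h2 : IsUnit (2 : R) := aux_two_unit hchar
  have hne : (-1 : Rˣ) ≠ 1 := by
    intro h
    exact hm1 1 (by simpa using congrArg Units.val h)
  have hm1' : ∀ a : Rˣ, (-1 : Rˣ) ≠ a ^ 2 := by
    intro a h
    refine hm1 a ?_
    have := congrArg Units.val h
    push_cast at this
    simpa using this
  obtain ⟨a, ha⟩ := aux_key hne (aux_sq_one h2) hm1' z hz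
  have haR : -(z : R) = (a : R) ^ 2 := by
    have := congrArg Units.val ha
    push_cast at this
    simpa using this
  refine ⟨Matrix.diagonal ![1, (a : R)], ?_, ?_⟩
  · rw [Matrix.det_diagonal]
    simpa [Fin.prod_univ_two] using a.isUnit
  · rw [mul_one, Matrix.diagonal_transpose, Matrix.diagonal_mul_diagonal]
    have hv : (fun i => ![1, (a : R)] i * ![1, (a : R)] i) = ![1, -(z : R)] := by
      funext i
      fin_cases i
      · simp
      · simpa [sq] using haR.symm
    rw [hv]
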